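/- The type II saddle map μ: V ⊗ V → A given by μ(v₋ ⊗ v₋) = 0, μ(v₊ ⊗ v₋) = X, μ(v₋ ⊗ v₊) = X, μ(v₊ ⊗ v₊) = 0 is sl2-equivariant, where V ⊗ V is identified with V₁ ⊗ V₁* (first factor v₋ ↔ v₀, v₊ ↔ v₁; second factor v₊ ↔ v₀*, v₋ ↔ v₁*) and A carries the trivial sl2-action. -/

import Mathlib

open TensorProduct

/-- V₁ = ℤ², the fundamental representation, with basis v₀, v₁. -/
abbrev V1 : Type := Fin 2 → ℤ
/-- V₁* = the dual, with basis v₀*, v₁*. -/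
abbrev Vd : Type := Fin 2 → ℤ

noncomputable def b1 : Module.Basis (Fin 2) ℤ V1 := Pi.basisFun ℤ (Fin 2)
noncomputable def bd : Module.Basis (Fin 2) ℤ Vd := Pi.basisFun ℤ (Fin 2)

noncomputable def v0 : V1 := b1 0
noncomputable def v1 : V1 := b1 1
noncomputable def d0 : Vd := bd 0
noncomputable def d1 : Vd := bd 1

/-- E v₀ = v₁, E v₁ = 0. -/
noncomputable def E1 : V1 →ₗ[ℤ] V1 := b1.constr ℤ ![v1, 0]
/-- F v₀ = 0, F v₁ = v₀. -/
noncomputable def F1 : V1 →ₗ[ℤ] V1 := b1.constr ℤ ![0, v0]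
/-- H v₀ = -v₀, H v₁ = v₁. -/
noncomputable def H1 : V1 →ₗ[ℤ] V1 := b1.constr ℤ ![-v0, v1]
/-- E v₀* = 0, E v₁* = -v₀*. -/
noncomputable def Ed : Vd →ₗ[ℤ] Vd := bd.constr ℤ ![0, -d0]
/-- F v₀* = -v₁*, F v₁* = 0. -/
noncomputable def Fd : Vd →ₗ[ℤ] Vd := bd.constr ℤ ![-d1, 0]
/-- H v₀* = v₀*, H v₁* = -v₁*. -/
noncomputable def Hd : Vd →ₗ[ℤ] Vd := bd.constr ℤ ![d0, -d1]

/-- Diagonal action of E on V₁ ⊗ V₁*. -/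
noncomputable def Et : V1 ⊗[ℤ] Vd →ₗ[ℤ] V1 ⊗[ℤ] Vd :=
  TensorProduct.map E1 LinearMap.id + TensorProduct.map LinearMap.id Ed
/-- Diagonal action of F on V₁ ⊗ V₁*. -/
noncomputable def Ft : V1 ⊗[ℤ] Vd →ₗ[ℤ] V1 ⊗[ℤ] Vd :=
  TensorProduct.map F1 LinearMap.id + TensorProduct.map LinearMap.id Fd
/-- Diagonal action of H on V₁ ⊗ V₁*. -/
noncomputable def Ht : V1 ⊗[ℤ] Vd →ₗ[ℤ] V1 ⊗[ℤ] Vd :=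
  TensorProduct.map H1 LinearMap.id + TensorProduct.map LinearMap.id Hd

/-- A = ℤ{1, X}, carrying the trivial sl2-action. -/
abbrev A : Type := Fin 2 → ℤ
noncomputable def bA : Module.Basis (Fin 2) ℤ A := Pi.basisFun ℤ (Fin 2)
noncomputable def X' : A := bA 1

/-- The type II saddle map μ : V ⊗ V → A. Under the identifications
v₋ ↔ v₀, v₊ ↔ v₁ (first factor) and v₊ ↔ v₀*, v₋ ↔ v₁* (second factor):
μ(v₀ ⊗ v₀*) = X (= μ(v₋ ⊗ v₊)), μ(v₀ ⊗ v₁*) = 0 (= μ(v₋ ⊗ v₋)),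
μ(v₁ ⊗ v₀*) = 0 (= μ(v₊ ⊗ v₊)), μ(v₁ ⊗ v₁*) = X (= μ(v₊ ⊗ v₋)). -/
noncomputable def μ : V1 ⊗[ℤ] Vd →ₗ[ℤ] A :=
  (b1.tensorProduct bd).constr ℤ fun p => ![![X', 0], ![0, X']] p.1 p.2

lemma μ_apply (i j : Fin 2) : μ (b1 i ⊗ₜ[ℤ] bd j) = ![![X', 0], ![0, X']] i j := by
  rw [μ, ← Module.Basis.tensorProduct_apply]
  exact Module.Basis.constr_basis _ _ _ _

/-- μ is sl2-equivariant: since A carries the trivial action,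
μ ∘ J = 0 ∘ μ = 0 for each generator J ∈ {E, F, H}. -/
theorem typeII_saddle_equivariant :
    μ ∘ₗ Et = (0 : A →ₗ[ℤ] A) ∘ₗ μ ∧
    μ ∘ₗ Ft = (0 : A →ₗ[ℤ] A) ∘ₗ μ ∧
    μ ∘ₗ Ht = (0 : A →ₗ[ℤ] A) ∘ₗ μ := by
  refine ⟨?_, ?_, ?_⟩ <;>
  · apply (b1.tensorProduct bd).ext
    rintro ⟨i, j⟩
    rw [Module.Basis.tensorProduct_apply]
    fin_cases i <;> fin_cases j <;>
      (change μ _ = 0; erw [LinearMap.add_apply, map_tmul, map_tmul]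
       simp [Et, Ft, Ht, E1, F1, H1, Ed, Fd, Hd, v0, v1, d0, d1,
        Module.Basis.constr_basis, TensorProduct.map_tmul,
        TensorProduct.tmul_neg, TensorProduct.neg_tmul, μ_apply])
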